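/- Let F : ℂ^{k+1} → ℂ^{k+1} have coordinates that are homogeneous polynomials of degree d, lifting a dominant rational map f of ℙ^k. For n ≥ 1 let H^{(n)} be the greatest common divisor of the coordinates of F^{∘n}, so that F^{∘n} = H^{(n)}·Ḟ^{(n)} with deg Ḟ^{(n)} = deg f^{∘n}. Then for all m, n ≥ 1, (H^{(n)})^{d^m} divides H^{(n+m)}. -/
import Mathlib


open MvPolynomial

noncomputable section

variable {k : ℕ}

/-- Composition of polynomial self-maps of `ℂ^{k+1}`: `(G ∘ F) i = G i (F 0, …, F k)`. -/
def polyComp (G F : Fin (k + 1) → MvPolynomial (Fin (k + 1)) ℂ) :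
    Fin (k + 1) → MvPolynomial (Fin (k + 1)) ℂ :=
  fun i => MvPolynomial.bind₁ F (G i)

/-- The `n`-fold iterate `F^{∘n}` of a polynomial self-map of `ℂ^{k+1}`. -/
def polyIter (F : Fin (k + 1) → MvPolynomial (Fin (k + 1)) ℂ) :
    ℕ → Fin (k + 1) → MvPolynomial (Fin (k + 1)) ℂ
  | 0 => fun i => MvPolynomial.X i
  | n + 1 => polyComp (polyIter F n) F

/-- `H` is a greatest common divisor of the family of polynomials `P`. -/
def IsGCDOf (H : MvPolynomial (Fin (k + 1)) ℂ)
    (P : Fin (k + 1) → MvPolynomial (Fin (k + 1)) ℂ) : Prop :=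
  (∀ i, H ∣ P i) ∧ ∀ H' : MvPolynomial (Fin (k + 1)) ℂ, (∀ i, H' ∣ P i) → H' ∣ H

lemma aeval_mul_left {σ : Type*} {R A : Type*} [CommRing R] [CommRing A] [Algebra R A]
    (p : MvPolynomial σ R) {e : ℕ} (hp : p.IsHomogeneous e) (c : A) (g : σ → A) :
    aeval (fun j => c * g j) p = c ^ e * aeval g p := by
  rw [p.as_sum, map_sum, map_sum, Finset.mul_sum]
  apply Finset.sum_congr rfl
  intro s hs
  have hdeg : (∑ j ∈ s.support, s j) = e := by
    have := hp (mem_support_iff.mp hs)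
    simpa [Finsupp.weight, Finsupp.linearCombination, Finsupp.sum] using this
  rw [aeval_monomial, aeval_monomial]
  simp only [Finsupp.prod, mul_pow, Finset.prod_mul_distrib, Finset.prod_pow_eq_pow_sum, hdeg]
  ring

lemma polyIter_succ' (F : Fin (k + 1) → MvPolynomial (Fin (k + 1)) ℂ) (m : ℕ) (i : Fin (k + 1)) :
    polyIter F (m + 1) i = MvPolynomial.bind₁ (polyIter F m) (F i) := by
  induction m with
  | zero => simp [polyIter, polyComp]
  | succ m ih =>
      show MvPolynomial.bind₁ F (polyIter F (m + 1) i) = _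
      rw [ih, bind₁_bind₁]
      rfl

lemma polyIter_add (F : Fin (k + 1) → MvPolynomial (Fin (k + 1)) ℂ) (n m : ℕ) :
    ∀ i, polyIter F (n + m) i = MvPolynomial.bind₁ (polyIter F n) (polyIter F m i) := by
  induction m with
  | zero => intro i; simp [polyIter]
  | succ m ih =>
      intro i
      rw [show n + (m + 1) = (n + m) + 1 from rfl, polyIter_succ', polyIter_succ',
        bind₁_bind₁]
      have h : polyIter F (n + m) = fun j => MvPolynomial.bind₁ (polyIter F n) (polyIter F m j) :=
        funext ih
      rw [h]

lemma polyIter_isHomogeneous (d : ℕ) (F : Fin (k + 1) → MvPolynomial (Fin (k + 1)) ℂ)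
    (hhom : ∀ i, (F i).IsHomogeneous d) (m : ℕ) (i : Fin (k + 1)) :
    (polyIter F m i).IsHomogeneous (d ^ m) := by
  induction m with
  | zero => simpa [polyIter] using isHomogeneous_X ℂ i
  | succ m ih =>
      have h : (MvPolynomial.aeval F (polyIter F m i)).IsHomogeneous (d * d ^ m) :=
        ih.aeval F hhom
      rw [pow_succ, Nat.mul_comm]
      exact h

/-- **Divisibility of the gcd's of the iterates.**
Let `F : ℂ^{k+1} → ℂ^{k+1}` have coordinates homogeneous polynomials of degree `d`,
lifting a dominant rational map of `ℙ^k`. If `H⁽ⁿ⁾` denotes the gcd of the coordinates of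
`F^{∘n}`, then for all `m, n ≥ 1`, `(H⁽ⁿ⁾)^{d^m}` divides `H⁽ⁿ⁺ᵐ⁾`. -/
theorem gcd_iterate_divides
    (d : ℕ) (hd : 2 ≤ d)
    (F : Fin (k + 1) → MvPolynomial (Fin (k + 1)) ℂ)
    (hhom : ∀ i, (F i).IsHomogeneous d)
    (hdom : ∃ i, F i ≠ 0)
    (n m : ℕ) (hn : 1 ≤ n) (hm : 1 ≤ m)
    (Hn Hnm : MvPolynomial (Fin (k + 1)) ℂ)
    (hHn : IsGCDOf Hn (polyIter F n)) (hHnm : IsGCDOf Hnm (polyIter F (n + m))) :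
    Hn ^ d ^ m ∣ Hnm := by
  apply hHnm.2
  intro i
  choose Q hQ using hHn.1
  have key : polyIter F (n + m) i = Hn ^ d ^ m * aeval Q (polyIter F m i) := by
    rw [polyIter_add F n m i]
    have : (polyIter F n) = fun j => Hn * Q j := funext hQ
    rw [show (MvPolynomial.bind₁ (polyIter F n) (polyIter F m i)) =
        aeval (fun j => Hn * Q j) (polyIter F m i) by rw [← this]; rfl]
    exact aeval_mul_left _ (polyIter_isHomogeneous d F hhom m i) Hn Q
  exact ⟨_, key⟩
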